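/- Root function criterion (core of Theorem 3.6). Let λ ∈ ℂ and k ∈ ℕ (including k = 0), and define φ_k : [0,2π] → ℂ by φ_k(x) = x^k e^{−i λ̄ x}, where λ̄ denotes the complex conjugate of λ. Then φ_k satisfies the non-local boundary condition φ_k(2π) = φ_k(0) + ∫₀^{2π} conj(i K(t)) · φ_k(t) dt if and only if Φ^{(k)}(λ) = 0, where Φ^{(k)} denotes the k-th complex derivative of Φ (with Φ^{(0)} = Φ). -/

import Mathlib

open MeasureTheory Real Complex

/-- `Φ(λ) = 1 − e^{2πiλ} + i ∫₀^{2π} e^{iλt} K(t) dt`. -/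
noncomputable def Phi (K : ℝ → ℂ) (lam : ℂ) : ℂ :=
  1 - Complex.exp (2 * Real.pi * Complex.I * lam)
    + Complex.I * ∫ t in (0:ℝ)..(2 * Real.pi), Complex.exp (Complex.I * lam * t) * K t

open intervalIntegral in
lemma f_hasDerivAt (K : ℝ → ℂ) (hKi : IntervalIntegrable K volume 0 (2 * Real.pi))
    (n : ℕ) (x₀ : ℂ) :
    HasDerivAt (fun x : ℂ => ∫ t in (0:ℝ)..(2 * Real.pi),
        (Complex.I * t) ^ n * Complex.exp (Complex.I * x * t) * K t)
      (∫ t in (0:ℝ)..(2 * Real.pi),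
        (Complex.I * t) ^ (n+1) * Complex.exp (Complex.I * x₀ * t) * K t) x₀ := by
  have h2pi : (0:ℝ) ≤ 2 * Real.pi := by positivity
  have huIoc : Set.uIoc (0:ℝ) (2 * Real.pi) = Set.Ioc 0 (2 * Real.pi) := Set.uIoc_of_le h2pi
  have hKm : AEStronglyMeasurable K (volume.restrict (Set.uIoc (0:ℝ) (2 * Real.pi))) := by
    rw [huIoc]; exact hKi.1.aestronglyMeasurable
  set C : ℝ := (2 * Real.pi) ^ (n+1) * Real.exp ((‖x₀‖ + 1) * (2 * Real.pi)) with hC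
  have := (intervalIntegral.hasDerivAt_integral_of_dominated_loc_of_deriv_le
      (F := fun (x : ℂ) (t : ℝ) => (Complex.I * t) ^ n * Complex.exp (Complex.I * x * t) * K t)
      (F' := fun (x : ℂ) (t : ℝ) => (Complex.I * t) ^ (n+1) * Complex.exp (Complex.I * x * t) * K t)
      (bound := fun t => C * ‖K t‖) (μ := volume) (a := 0) (b := 2 * Real.pi) (x₀ := x₀)
      (Metric.ball_mem_nhds x₀ one_pos)
      (Filter.Eventually.of_forall fun x => by
        exact (Continuous.aestronglyMeasurable (by continuity)).mul hKm)
      (hKi.continuousOn_mul (g := fun t : ℝ => (Complex.I * t) ^ n * Complex.exp (Complex.I * x₀ * t))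
        (Continuous.continuousOn (by continuity)))
      ((Continuous.aestronglyMeasurable (by continuity)).mul hKm)
      (Filter.Eventually.of_forall fun t => by
        intro ht x hx
        rw [huIoc] at ht
        have hxnorm : ‖x‖ ≤ ‖x₀‖ + 1 := by
          have := mem_ball_iff_norm.mp hx
          calc ‖x‖ ≤ ‖x₀‖ + ‖x - x₀‖ := by
                simpa using norm_add_le x₀ (x - x₀)
            _ ≤ ‖x₀‖ + 1 := by linarith [this.le]
        have ht0 : 0 < t := ht.1
        have ht2 : t ≤ 2 * Real.pi := ht.2
        have h1 : ‖(Complex.I * t) ^ (n+1)‖ ≤ (2 * Real.pi) ^ (n+1) := by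
          rw [norm_pow]
          apply pow_le_pow_left₀ (norm_nonneg _)
          rw [norm_mul, Complex.norm_I, one_mul, Complex.norm_real, Real.norm_eq_abs,
            abs_of_pos ht0]
          exact ht2
        have h2 : ‖Complex.exp (Complex.I * x * t)‖ ≤ Real.exp ((‖x₀‖ + 1) * (2 * Real.pi)) := by
          rw [Complex.norm_exp]
          apply Real.exp_le_exp.mpr
          have hre : (Complex.I * x * t).re = -x.im * t := by
            simp [Complex.mul_re, Complex.mul_im]
          rw [hre]
          calc -x.im * t ≤ |x.im| * t := by
                apply mul_le_mul_of_nonneg_right _ ht0.le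
                exact neg_le_abs _
            _ ≤ ‖x‖ * (2 * Real.pi) := by
                apply mul_le_mul (Complex.abs_im_le_norm x) ht2 ht0.le (norm_nonneg _)
            _ ≤ (‖x₀‖ + 1) * (2 * Real.pi) := by
                apply mul_le_mul_of_nonneg_right hxnorm (by positivity)
        calc ‖(Complex.I * t) ^ (n+1) * Complex.exp (Complex.I * x * t) * K t‖
            = ‖(Complex.I * t) ^ (n+1)‖ * ‖Complex.exp (Complex.I * x * t)‖ * ‖K t‖ := by
              rw [norm_mul, norm_mul]
          _ ≤ (2 * Real.pi) ^ (n+1) * Real.exp ((‖x₀‖ + 1) * (2 * Real.pi)) * ‖K t‖ := by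
              apply mul_le_mul_of_nonneg_right _ (norm_nonneg _)
              exact mul_le_mul h1 h2 (norm_nonneg _) (by positivity)
          _ = C * ‖K t‖ := rfl)
      (hKi.norm.const_mul C)
      (Filter.Eventually.of_forall fun t _ x _ => by
        have hexp : HasDerivAt (fun x : ℂ => Complex.exp (Complex.I * x * t))
            (Complex.exp (Complex.I * x * t) * (Complex.I * t)) x := by
          have hlin : HasDerivAt (fun x : ℂ => Complex.I * x * t) (Complex.I * t) x := by
            simpa using (((hasDerivAt_id x).const_mul Complex.I).mul_const (t : ℂ))
          exact hlin.cexp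
        have := (hexp.const_mul ((Complex.I * t) ^ n)).mul_const (K t)
        convert this using 1
        · rfl
        · ring))
  exact this.2


lemma phi_iteratedDeriv (K : ℝ → ℂ) (hKi : IntervalIntegrable K volume 0 (2 * Real.pi)) (k : ℕ) :
    iteratedDeriv k (Phi K) = fun lam =>
      (0:ℂ) ^ k - (2 * Real.pi * Complex.I) ^ k * Complex.exp (2 * Real.pi * Complex.I * lam)
        + Complex.I * ∫ t in (0:ℝ)..(2 * Real.pi),
            (Complex.I * t) ^ k * Complex.exp (Complex.I * lam * t) * K t := by
  induction k with
  | zero =>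
      funext lam
      simp [iteratedDeriv_zero, Phi]
  | succ k ih =>
      funext lam
      rw [iteratedDeriv_succ, ih]
      have hexp : HasDerivAt (fun x : ℂ => Complex.exp (2 * Real.pi * Complex.I * x))
          (Complex.exp (2 * Real.pi * Complex.I * lam) * (2 * Real.pi * Complex.I)) lam := by
        have hlin : HasDerivAt (fun x : ℂ => 2 * Real.pi * Complex.I * x)
            (2 * Real.pi * Complex.I) lam := by
          simpa using (hasDerivAt_id lam).const_mul (2 * Real.pi * Complex.I)
        exact hlin.cexp
      have hint := f_hasDerivAt K hKi k lam
      have hD : HasDerivAt (fun x : ℂ =>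
          (0:ℂ) ^ k - (2 * Real.pi * Complex.I) ^ k * Complex.exp (2 * Real.pi * Complex.I * x)
            + Complex.I * ∫ t in (0:ℝ)..(2 * Real.pi),
                (Complex.I * t) ^ k * Complex.exp (Complex.I * x * t) * K t)
          (0 - (2 * Real.pi * Complex.I) ^ k *
              (Complex.exp (2 * Real.pi * Complex.I * lam) * (2 * Real.pi * Complex.I))
            + Complex.I * ∫ t in (0:ℝ)..(2 * Real.pi),
                (Complex.I * t) ^ (k+1) * Complex.exp (Complex.I * lam * t) * K t) lam := by
        exact ((hasDerivAt_const lam ((0:ℂ)^k)).sub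
          (hexp.const_mul ((2 * Real.pi * Complex.I) ^ k))).add (hint.const_mul Complex.I)
      rw [hD.deriv]
      ring

lemma intervalIntegral_conj (f : ℝ → ℂ) (a b : ℝ) :
    (∫ t in a..b, (starRingEnd ℂ) (f t)) = (starRingEnd ℂ) (∫ t in a..b, f t) := by
  simp only [intervalIntegral, integral_conj, map_sub]


/-- Root function criterion (core of Theorem 3.6): the function
`φ_k(x) = x^k e^{−i λ̄ x}` satisfies the non-local boundary condition
`φ_k(2π) = φ_k(0) + ∫₀^{2π} conj(iK(t)) φ_k(t) dt` if and only if `Φ^{(k)}(λ) = 0`. -/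
theorem root_function_boundary_condition_iff
    (K : ℝ → ℂ)
    (hK : MeasureTheory.MemLp K 2 (MeasureTheory.volume.restrict (Set.Ioo 0 (2 * Real.pi))))
    (lam : ℂ) (k : ℕ) :
    (((2 * Real.pi : ℝ) : ℂ) ^ k *
        Complex.exp (-(Complex.I * (starRingEnd ℂ) lam * (2 * Real.pi : ℝ)))
      = ((0 : ℝ) : ℂ) ^ k * Complex.exp (-(Complex.I * (starRingEnd ℂ) lam * (0 : ℝ)))
        + ∫ t in (0:ℝ)..(2 * Real.pi),
            (starRingEnd ℂ) (Complex.I * K t) *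
              ((t : ℂ) ^ k * Complex.exp (-(Complex.I * (starRingEnd ℂ) lam * t))))
      ↔ iteratedDeriv k (Phi K) lam = 0 := by
  -- integrability of K
  have hrestr : MeasureTheory.volume.restrict (Set.Ioo (0:ℝ) (2 * Real.pi))
      = MeasureTheory.volume.restrict (Set.Ioc (0:ℝ) (2 * Real.pi)) :=
    Measure.restrict_congr_set Ioo_ae_eq_Ioc
  have hKL1 : MeasureTheory.IntegrableOn K (Set.Ioc (0:ℝ) (2 * Real.pi)) := by
    rw [hrestr] at hK
    haveI : Fact (MeasureTheory.volume (Set.Ioc (0:ℝ) (2 * Real.pi)) < ⊤) :=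
      ⟨measure_Ioc_lt_top⟩
    exact hK.integrable (by norm_num)
  have hKi : IntervalIntegrable K volume 0 (2 * Real.pi) :=
    (intervalIntegrable_iff_integrableOn_Ioc_of_le (by positivity)).mpr hKL1
  set J : ℂ := ∫ t in (0:ℝ)..(2 * Real.pi), (t:ℂ) ^ k * Complex.exp (Complex.I * lam * t) * K t
    with hJ
  -- rewrite iterated derivative
  rw [phi_iteratedDeriv K hKi k]
  have hIJ : (∫ t in (0:ℝ)..(2 * Real.pi),
      (Complex.I * t) ^ k * Complex.exp (Complex.I * lam * t) * K t) = Complex.I ^ k * J := by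
    rw [hJ, ← intervalIntegral.integral_const_mul]
    congr 1; funext t; ring
  -- conjugate the boundary condition
  rw [← (starRingEnd ℂ).injective.eq_iff (a := ((2 * Real.pi : ℝ) : ℂ) ^ k * _)]
  rw [map_add, ← intervalIntegral_conj]
  simp only [← Complex.exp_conj, map_mul, map_pow, map_neg, map_zero, neg_zero,
    Complex.conj_conj, Complex.conj_ofReal, Complex.conj_I, neg_mul, neg_neg,
    Complex.exp_zero, mul_one]
  rw [hIJ]
  have hint2 : (∫ t in (0:ℝ)..(2 * Real.pi),
      Complex.I * K t * ((t:ℂ) ^ k * Complex.exp (Complex.I * lam * t))) = Complex.I * J := by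
    rw [hJ, ← intervalIntegral.integral_const_mul]
    congr 1; funext t; ring
  rw [hint2]
  have hexpeq : Complex.exp (Complex.I * lam * ((2 * Real.pi : ℝ) : ℂ))
      = Complex.exp (2 * (Real.pi : ℂ) * Complex.I * lam) := by
    congr 1; push_cast; ring
  rw [hexpeq]
  push_cast
  rcases k with _ | k
  · simp only [pow_zero, one_mul, mul_one, mul_zero, Complex.exp_zero]
    constructor
    · intro h; linear_combination -h
    · intro h; linear_combination -h
  · have hpow : (Complex.I : ℂ) ^ (k+1) ≠ 0 := pow_ne_zero _ Complex.I_ne_zero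
    simp only [zero_pow (Nat.succ_ne_zero k), zero_mul, mul_zero, Complex.exp_zero, mul_one]
    constructor
    · intro h; linear_combination -(Complex.I ^ (k+1)) * h
    · intro h
      have h2 : Complex.I ^ (k+1) *
          ((2 * (Real.pi : ℂ)) ^ (k+1) * Complex.exp (2 * (Real.pi : ℂ) * Complex.I * lam)
            - (0 + Complex.I * J)) = 0 := by
        linear_combination -h
      have h3 := (mul_eq_zero.mp h2).resolve_left hpow
      linear_combination h3
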